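/- arXiv:0805.0631 — 4 statements merged into one kernel-verified Lean document; each statement's English description precedes it below -/
import Mathlib

section
/- Let A₁, A₂ be real n×n matrices and B₁, B₂ real n×m matrices. Suppose F(x,u) = (ℓ₁x, ℓ₂x + ℓ₃u) is an invertible linear map of ℝⁿ×ℝᵐ (with ℓ₁ : ℝⁿ→ℝⁿ, ℓ₂ : ℝⁿ→ℝᵐ, ℓ₃ : ℝᵐ→ℝᵐ) that carries every solution-control pair of ẋ = A₁x + B₁u to a solution-control pair of ẏ = A₂y + B₂v via (y,v) = F(x,u). Then ℓ₁ and ℓ₃ are invertible, and setting O = ℓ₁⁻¹, Q = ℓ₃⁻¹, L = −ℓ₃⁻¹ℓ₂ℓ₁⁻¹ one has A₂ = O⁻¹A₁O + O⁻¹B₁L and B₂ = O⁻¹B₁Q. -/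
open Matrix

/-- Auxiliary: matrices are equal if they act equally on all vectors. -/
theorem stmt1_mulVec_ext {k l : ℕ} {M N : Matrix (Fin k) (Fin l) ℝ}
    (h : ∀ v, M.mulVec v = N.mulVec v) : M = N := by
  ext i j
  have := congrFun (h (Pi.single j 1)) i
  simpa [Matrix.mulVec_single] using this

/-- Auxiliary: the transport hypothesis yields a pointwise algebraic identity, by
constructing, for arbitrary initial data `(x₀, u₀)`, the solution of the extended
linear ODE with constant control via the operator exponential. -/
theorem stmt1_key_identity (n m : ℕ)
    (A₁ A₂ : Matrix (Fin n) (Fin n) ℝ) (B₁ B₂ : Matrix (Fin n) (Fin m) ℝ)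
    (ℓ₁ : Matrix (Fin n) (Fin n) ℝ) (ℓ₂ : Matrix (Fin m) (Fin n) ℝ)
    (ℓ₃ : Matrix (Fin m) (Fin m) ℝ)
    (htrans : ∀ (x : ℝ → Fin n → ℝ) (u : ℝ → Fin m → ℝ), Continuous u →
      (∀ t : ℝ, 0 ≤ t → HasDerivAt x (A₁.mulVec (x t) + B₁.mulVec (u t)) t) →
      ∀ t : ℝ, 0 ≤ t →
        HasDerivAt (fun s => ℓ₁.mulVec (x s))
          (A₂.mulVec (ℓ₁.mulVec (x t)) +
            B₂.mulVec (ℓ₂.mulVec (x t) + ℓ₃.mulVec (u t))) t)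
    (x₀ : Fin n → ℝ) (u₀ : Fin m → ℝ) :
    ℓ₁.mulVec (A₁.mulVec x₀ + B₁.mulVec u₀) =
      A₂.mulVec (ℓ₁.mulVec x₀) + B₂.mulVec (ℓ₂.mulVec x₀ + ℓ₃.mulVec u₀) := by
  classical
  set E := (Fin n ⊕ Fin m) → ℝ
  set M : Matrix (Fin n ⊕ Fin m) (Fin n ⊕ Fin m) ℝ := fromBlocks A₁ B₁ 0 0 with hM
  set T : E →L[ℝ] E := LinearMap.toContinuousLinearMap M.mulVecLin with hT
  set z₀ : E := Sum.elim x₀ u₀ with hz₀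
  set z : ℝ → E := fun t => (NormedSpace.exp (t • T)) z₀ with hz
  have hzd : ∀ t : ℝ, HasDerivAt z (T (z t)) t := by
    intro t
    have h1 : HasDerivAt (fun s : ℝ => NormedSpace.exp (s • T))
        (T * NormedSpace.exp (t • T)) t := hasDerivAt_exp_smul_const' T t
    have h2 := ((ContinuousLinearMap.apply ℝ E z₀).hasFDerivAt.comp_hasDerivAt t h1)
    exact h2
  have hzc : Continuous z := by
    have : Continuous fun t : ℝ => NormedSpace.exp (t • T) :=
      continuous_iff_continuousAt.2 fun t => (hasDerivAt_exp_smul_const' T t).continuousAt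
    exact ((ContinuousLinearMap.apply ℝ E z₀).continuous).comp this
  set x : ℝ → Fin n → ℝ := fun t i => z t (Sum.inl i) with hx
  set u : ℝ → Fin m → ℝ := fun t j => z t (Sum.inr j) with hu
  have hzelim : ∀ t, z t = Sum.elim (x t) (u t) := by
    intro t; funext i; cases i <;> rfl
  have hTz : ∀ t, T (z t) = Sum.elim (A₁.mulVec (x t) + B₁.mulVec (u t)) 0 := by
    intro t
    have : T (z t) = M.mulVec (z t) := rfl
    rw [this, hzelim t, hM, fromBlocks_mulVec]
    simp
  set Pl : E →L[ℝ] (Fin n → ℝ) :=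
    ContinuousLinearMap.pi (fun i => ContinuousLinearMap.proj (Sum.inl i)) with hPl
  have hxz : x = fun t => Pl (z t) := rfl
  have hxd : ∀ t : ℝ, 0 ≤ t → HasDerivAt x (A₁.mulVec (x t) + B₁.mulVec (u t)) t := by
    intro t _
    have := (Pl.hasFDerivAt.comp_hasDerivAt t (hzd t))
    rw [hxz]
    convert this using 1 <;> try rfl
    rw [hTz t]
    rfl
  have huc : Continuous u := by
    rw [hu]; exact continuous_pi fun j => (continuous_apply (Sum.inr j)).comp hzc
  have h1 := htrans x u huc hxd 0 le_rfl
  set Lc : (Fin n → ℝ) →L[ℝ] (Fin n → ℝ) := LinearMap.toContinuousLinearMap ℓ₁.mulVecLin with hLc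
  have h2 : HasDerivAt (fun s => ℓ₁.mulVec (x s))
      (ℓ₁.mulVec (A₁.mulVec (x 0) + B₁.mulVec (u 0))) 0 :=
    (Lc.hasFDerivAt.comp_hasDerivAt 0 (hxd 0 le_rfl))
  have heq := h2.unique h1
  have hx0 : x 0 = x₀ := by
    funext i
    simp [hx, hz, zero_smul, NormedSpace.exp_zero, hz₀]
  have hu0 : u 0 = u₀ := by
    funext j
    simp [hu, hz, zero_smul, NormedSpace.exp_zero, hz₀]
  rw [hx0, hu0] at heq
  exact heq

/-- a triangular invertible linear map transporting all solution-control
pairs forces the feedback-equivalence matrix relations. -/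
theorem stmt_1 (n m : ℕ)
    (A₁ A₂ : Matrix (Fin n) (Fin n) ℝ) (B₁ B₂ : Matrix (Fin n) (Fin m) ℝ)
    (ℓ₁ : Matrix (Fin n) (Fin n) ℝ) (ℓ₂ : Matrix (Fin m) (Fin n) ℝ)
    (ℓ₃ : Matrix (Fin m) (Fin m) ℝ)
    (hbij : Function.Bijective (fun p : (Fin n → ℝ) × (Fin m → ℝ) =>
      (ℓ₁.mulVec p.1, ℓ₂.mulVec p.1 + ℓ₃.mulVec p.2)))
    (htrans : ∀ (x : ℝ → Fin n → ℝ) (u : ℝ → Fin m → ℝ), Continuous u →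
      (∀ t : ℝ, 0 ≤ t → HasDerivAt x (A₁.mulVec (x t) + B₁.mulVec (u t)) t) →
      ∀ t : ℝ, 0 ≤ t →
        HasDerivAt (fun s => ℓ₁.mulVec (x s))
          (A₂.mulVec (ℓ₁.mulVec (x t)) +
            B₂.mulVec (ℓ₂.mulVec (x t) + ℓ₃.mulVec (u t))) t) :
    IsUnit ℓ₁ ∧ IsUnit ℓ₃ ∧
    ∃ (O : Matrix (Fin n) (Fin n) ℝ) (Q : Matrix (Fin m) (Fin m) ℝ)
      (L : Matrix (Fin m) (Fin n) ℝ),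
      O = ℓ₁⁻¹ ∧ Q = ℓ₃⁻¹ ∧ L = -(ℓ₃⁻¹ * ℓ₂ * ℓ₁⁻¹) ∧
      A₂ = O⁻¹ * A₁ * O + O⁻¹ * B₁ * L ∧ B₂ = O⁻¹ * B₁ * Q := by
  have key := stmt1_key_identity n m A₁ A₂ B₁ B₂ ℓ₁ ℓ₂ ℓ₃ htrans
  have hu1 : IsUnit ℓ₁ := by
    rw [← Matrix.mulVec_surjective_iff_isUnit]
    intro y
    obtain ⟨p, hp⟩ := hbij.2 (y, 0)
    exact ⟨p.1, congrArg Prod.fst hp⟩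
  have hu3 : IsUnit ℓ₃ := by
    rw [← Matrix.mulVec_injective_iff_isUnit]
    intro v w h
    have := hbij.1 (a₁ := (0, v)) (a₂ := (0, w)) (by simp [h])
    exact congrArg Prod.snd this
  have h1d : IsUnit ℓ₁.det := (Matrix.isUnit_iff_isUnit_det _).mp hu1
  have h3d : IsUnit ℓ₃.det := (Matrix.isUnit_iff_isUnit_det _).mp hu3
  have hA : ℓ₁ * A₁ = A₂ * ℓ₁ + B₂ * ℓ₂ := by
    apply stmt1_mulVec_ext
    intro v
    have := key v 0
    simpa [Matrix.mulVec_mulVec, Matrix.add_mulVec] using this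
  have hB : ℓ₁ * B₁ = B₂ * ℓ₃ := by
    apply stmt1_mulVec_ext
    intro v
    have := key 0 v
    simpa [Matrix.mulVec_mulVec, Matrix.add_mulVec] using this
  have hOinv : (ℓ₁⁻¹)⁻¹ = ℓ₁ := Matrix.nonsing_inv_nonsing_inv ℓ₁ h1d
  have hB2 : B₂ = ℓ₁ * B₁ * ℓ₃⁻¹ := by
    rw [hB, Matrix.mul_assoc, Matrix.mul_nonsing_inv _ h3d, Matrix.mul_one]
  refine ⟨hu1, hu3, ℓ₁⁻¹, ℓ₃⁻¹, -(ℓ₃⁻¹ * ℓ₂ * ℓ₁⁻¹), rfl, rfl, rfl, ?_, ?_⟩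
  · rw [hOinv]
    have : ℓ₁ * B₁ * -(ℓ₃⁻¹ * ℓ₂ * ℓ₁⁻¹) = -(B₂ * ℓ₂ * ℓ₁⁻¹) := by
      rw [hB]
      rw [Matrix.mul_neg]
      congr 1
      rw [← Matrix.mul_assoc, ← Matrix.mul_assoc, Matrix.mul_assoc B₂ ℓ₃,
        Matrix.mul_nonsing_inv _ h3d, Matrix.mul_one]
    rw [this]
    have : ℓ₁ * A₁ * ℓ₁⁻¹ = (A₂ * ℓ₁ + B₂ * ℓ₂) * ℓ₁⁻¹ := by rw [hA]
    rw [this, Matrix.add_mul, Matrix.mul_assoc A₂, Matrix.mul_nonsing_inv _ h1d,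
      Matrix.mul_one]
    rw [add_assoc, add_neg_cancel, add_zero]
  · rw [hOinv, hB2]
end

section
/- Suppose F(x,u) = (H(x,u), G(x,u)) is a C¹ diffeomorphism of ℝⁿ×ℝᵐ carrying solution-control pairs of ẋ = A₁x + B₁u to those of ẏ = A₂y + B₂v, with H independent of u. Writing D_xH(0) for the derivative of H at 0 in x, and D_xG(0,0), D_uG(0,0) for the partial derivatives of G at (0,0), the following identities hold: D_xH(0)·A₁ = A₂·D_xH(0) + B₂·D_xG(0,0) and D_xH(0)·B₁ = B₂·D_uG(0,0). -/
open Matrix NormedSpace Filter Asymptotics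

attribute [local instance] Matrix.linftyOpSemiNormedRing Matrix.linftyOpNormedRing
  Matrix.linftyOpNormedAlgebra

/-- Pointwise identity: the chain rule plus the transfer hypothesis give
`DH(x₀)(A₁x₀ + B₁u₀) = A₂ H(x₀) + B₂ G(x₀,u₀)` for every point `(x₀,u₀)`. -/
theorem stmt_8_key (n m : ℕ)
    (A₁ A₂ : Matrix (Fin n) (Fin n) ℝ) (B₁ B₂ : Matrix (Fin n) (Fin m) ℝ)
    (H : (Fin n → ℝ) → (Fin n → ℝ))
    (G : (Fin n → ℝ) → (Fin m → ℝ) → (Fin m → ℝ))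
    (hH : Differentiable ℝ H)
    (htrans : ∀ (x : ℝ → Fin n → ℝ) (u : ℝ → Fin m → ℝ), Continuous u →
      (∀ t : ℝ, 0 ≤ t → HasDerivAt x (A₁.mulVec (x t) + B₁.mulVec (u t)) t) →
      ∀ t : ℝ, 0 ≤ t →
        HasDerivAt (fun s => H (x s))
          (A₂.mulVec (H (x t)) + B₂.mulVec (G (x t) (u t))) t)
    (x₀ : Fin n → ℝ) (u₀ : Fin m → ℝ) :
    fderiv ℝ H x₀ (A₁ *ᵥ x₀ + B₁ *ᵥ u₀) = A₂ *ᵥ H x₀ + B₂ *ᵥ G x₀ u₀ := by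
  classical
  set M : Matrix (Fin n ⊕ Fin m) (Fin n ⊕ Fin m) ℝ := fromBlocks A₁ B₁ 0 0 with hMdef
  set z₀ : Fin n ⊕ Fin m → ℝ := Sum.elim x₀ u₀ with hz₀def
  let L : Matrix (Fin n ⊕ Fin m) (Fin n ⊕ Fin m) ℝ →L[ℝ] (Fin n ⊕ Fin m → ℝ) :=
    LinearMap.toContinuousLinearMap
      { toFun := fun N => N *ᵥ z₀
        map_add' := fun N P => Matrix.add_mulVec N P z₀
        map_smul' := fun c N => Matrix.smul_mulVec c N z₀ }
  let z : ℝ → Fin n ⊕ Fin m → ℝ := fun t => L (exp (t • M))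
  have hLapp : ∀ N, L N = N *ᵥ z₀ := fun _ => rfl
  have hz : ∀ t : ℝ, HasDerivAt z (M *ᵥ z t) t := by
    intro t
    have h1 : HasDerivAt (fun s : ℝ => exp (s • M)) (M * exp (t • M)) t :=
      hasDerivAt_exp_smul_const' M t
    have h2 := (L.hasFDerivAt).comp_hasDerivAt t h1
    have h3 : L (M * exp (t • M)) = M *ᵥ z t := by
      rw [hLapp]
      show (M * exp (t • M)) *ᵥ z₀ = M *ᵥ (exp (t • M) *ᵥ z₀)
      rw [Matrix.mulVec_mulVec]
    rw [← h3]
    exact h2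
  let Pl : ((Fin n ⊕ Fin m) → ℝ) →L[ℝ] (Fin n → ℝ) :=
    LinearMap.toContinuousLinearMap (LinearMap.funLeft ℝ ℝ Sum.inl)
  let Pr : ((Fin n ⊕ Fin m) → ℝ) →L[ℝ] (Fin m → ℝ) :=
    LinearMap.toContinuousLinearMap (LinearMap.funLeft ℝ ℝ Sum.inr)
  let x : ℝ → Fin n → ℝ := fun t => Pl (z t)
  let u : ℝ → Fin m → ℝ := fun t => Pr (z t)
  have hMz : ∀ t : ℝ, M *ᵥ z t = Sum.elim (A₁ *ᵥ x t + B₁ *ᵥ u t) 0 := by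
    intro t
    rw [hMdef, Matrix.fromBlocks_mulVec]
    simp only [Matrix.zero_mulVec, add_zero]
    rfl
  have hx : ∀ t : ℝ, HasDerivAt x (A₁ *ᵥ x t + B₁ *ᵥ u t) t := by
    intro t
    have h2 := (Pl.hasFDerivAt).comp_hasDerivAt t (hz t)
    have h3 : Pl (M *ᵥ z t) = A₁ *ᵥ x t + B₁ *ᵥ u t := by
      rw [hMz t]; rfl
    rw [h3] at h2
    exact h2
  have hzc : Continuous z := continuous_iff_continuousAt.2 fun t => (hz t).continuousAt
  have huc : Continuous u := Pr.continuous.comp hzc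
  have hz0 : z 0 = z₀ := by
    show L (exp ((0 : ℝ) • M)) = z₀
    rw [zero_smul, exp_zero, hLapp, Matrix.one_mulVec]
  have hx0 : x 0 = x₀ := by
    show Pl (z 0) = x₀
    rw [hz0]; rfl
  have hu0 : u 0 = u₀ := by
    show Pr (z 0) = u₀
    rw [hz0]; rfl
  have hder1 : HasDerivAt (fun s => H (x s))
      (fderiv ℝ H (x 0) (A₁ *ᵥ x 0 + B₁ *ᵥ u 0)) 0 :=
    ((hH (x 0)).hasFDerivAt).comp_hasDerivAt 0 (hx 0)
  have hder2 := htrans x u huc (fun t _ => hx t) 0 le_rfl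
  have := hder1.unique hder2
  rw [hx0, hu0] at this
  exact this

/-- the derivative identities satisfied by a C¹ equivalence
transformation `F(x,u) = (H(x), G(x,u))` between two linear controlled systems. -/
theorem stmt_8 (n m : ℕ)
    (A₁ A₂ : Matrix (Fin n) (Fin n) ℝ) (B₁ B₂ : Matrix (Fin n) (Fin m) ℝ)
    (H : (Fin n → ℝ) → (Fin n → ℝ))
    (G : (Fin n → ℝ) → (Fin m → ℝ) → (Fin m → ℝ))
    (hF : ContDiff ℝ 1 (fun p : (Fin n → ℝ) × (Fin m → ℝ) => (H p.1, G p.1 p.2)))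
    (hdiffeo : ∃ Finv : (Fin n → ℝ) × (Fin m → ℝ) → (Fin n → ℝ) × (Fin m → ℝ),
      ContDiff ℝ 1 Finv ∧
      Function.LeftInverse Finv (fun p : (Fin n → ℝ) × (Fin m → ℝ) => (H p.1, G p.1 p.2)) ∧
      Function.RightInverse Finv (fun p : (Fin n → ℝ) × (Fin m → ℝ) => (H p.1, G p.1 p.2)))
    (hH0 : H 0 = 0) (hG0 : G 0 0 = 0)
    (htrans : ∀ (x : ℝ → Fin n → ℝ) (u : ℝ → Fin m → ℝ), Continuous u →
      (∀ t : ℝ, 0 ≤ t → HasDerivAt x (A₁.mulVec (x t) + B₁.mulVec (u t)) t) →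
      ∀ t : ℝ, 0 ≤ t →
        HasDerivAt (fun s => H (x s))
          (A₂.mulVec (H (x t)) + B₂.mulVec (G (x t) (u t))) t) :
    (∀ w : Fin n → ℝ,
      fderiv ℝ H 0 (A₁.mulVec w) =
        A₂.mulVec (fderiv ℝ H 0 w) + B₂.mulVec (fderiv ℝ (fun x => G x 0) 0 w)) ∧
    (∀ w : Fin m → ℝ,
      fderiv ℝ H 0 (B₁.mulVec w) = B₂.mulVec (fderiv ℝ (fun v => G 0 v) 0 w)) := by
  classical
  -- smoothness of the pieces
  have hHc : ContDiff ℝ 1 H := by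
    have := (hF.fst).comp
      ((ContDiff.prodMk contDiff_id contDiff_const : ContDiff ℝ 1 fun x : Fin n → ℝ => (x, (0 : Fin m → ℝ))))
    exact this
  have hG₁c : ContDiff ℝ 1 (fun x : Fin n → ℝ => G x 0) :=
    (hF.snd).comp (ContDiff.prodMk contDiff_id contDiff_const)
  have hG₂c : ContDiff ℝ 1 (fun v : Fin m → ℝ => G 0 v) :=
    (hF.snd).comp (ContDiff.prodMk contDiff_const contDiff_id)
  have hHd : Differentiable ℝ H := hHc.differentiable one_ne_zero
  have key := stmt_8_key n m A₁ A₂ B₁ B₂ H G hHd htrans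
  -- continuous linear versions of the matrices
  let A₁C : (Fin n → ℝ) →L[ℝ] (Fin n → ℝ) := LinearMap.toContinuousLinearMap A₁.mulVecLin
  let A₂C : (Fin n → ℝ) →L[ℝ] (Fin n → ℝ) := LinearMap.toContinuousLinearMap A₂.mulVecLin
  let B₁C : (Fin m → ℝ) →L[ℝ] (Fin n → ℝ) := LinearMap.toContinuousLinearMap B₁.mulVecLin
  let B₂C : (Fin m → ℝ) →L[ℝ] (Fin n → ℝ) := LinearMap.toContinuousLinearMap B₂.mulVecLin
  have hA₁C : ∀ v, A₁C v = A₁ *ᵥ v := fun _ => rfl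
  have hA₂C : ∀ v, A₂C v = A₂ *ᵥ v := fun _ => rfl
  have hB₁C : ∀ v, B₁C v = B₁ *ᵥ v := fun _ => rfl
  have hB₂C : ∀ v, B₂C v = B₂ *ᵥ v := fun _ => rfl
  set DH : (Fin n → ℝ) →L[ℝ] (Fin n → ℝ) := fderiv ℝ H 0 with hDHdef
  set DG₁ : (Fin n → ℝ) →L[ℝ] (Fin m → ℝ) := fderiv ℝ (fun x : Fin n → ℝ => G x 0) 0 with hDG₁def
  set DG₂ : (Fin m → ℝ) →L[ℝ] (Fin m → ℝ) := fderiv ℝ (fun v : Fin m → ℝ => G 0 v) 0 with hDG₂def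
  constructor
  · -- first identity
    -- f₁ x = fderiv H x (A₁ x),   g₁ x = A₂ H x + B₂ G x 0
    have key1 : ∀ xx : Fin n → ℝ,
        fderiv ℝ H xx (A₁ *ᵥ xx) = A₂ *ᵥ H xx + B₂ *ᵥ G xx 0 := by
      intro xx
      have := key xx 0
      simpa [Matrix.mulVec_zero] using this
    -- f₁ has derivative DH ∘ A₁C at 0
    have hf₁ : HasFDerivAt (fun xx : Fin n → ℝ => fderiv ℝ H xx (A₁ *ᵥ xx)) (DH.comp A₁C) 0 := by
      rw [hasFDerivAt_iff_isLittleO_nhds_zero]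
      have heq : (fun h : Fin n → ℝ =>
            fderiv ℝ H (0 + h) (A₁ *ᵥ (0 + h)) - fderiv ℝ H 0 (A₁ *ᵥ (0 : Fin n → ℝ))
              - (DH.comp A₁C) h)
          = fun h : Fin n → ℝ => (fderiv ℝ H h - fderiv ℝ H 0) (A₁C h) := by
        funext h
        simp [Matrix.mulVec_zero, hA₁C, hDHdef]
      rw [heq]
      rw [Asymptotics.isLittleO_iff]
      intro c hc
      have hcont : Continuous fun xx : Fin n → ℝ => fderiv ℝ H xx :=
        hHc.continuous_fderiv one_ne_zero
      have htend : Tendsto (fun h : Fin n → ℝ => ‖fderiv ℝ H h - fderiv ℝ H 0‖)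
          (nhds 0) (nhds 0) := by
        have : Tendsto (fun h : Fin n → ℝ => fderiv ℝ H h - fderiv ℝ H 0)
            (nhds 0) (nhds (fderiv ℝ H 0 - fderiv ℝ H 0)) :=
          ((hcont.tendsto 0).sub tendsto_const_nhds)
        rw [sub_self] at this
        simpa using this.norm
      have hcpos : (0 : ℝ) < c / (‖A₁C‖ + 1) := by positivity
      filter_upwards [htend.eventually (gt_mem_nhds hcpos)] with h hh
      calc ‖(fderiv ℝ H h - fderiv ℝ H 0) (A₁C h)‖
          ≤ ‖fderiv ℝ H h - fderiv ℝ H 0‖ * ‖A₁C h‖ :=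
            ContinuousLinearMap.le_opNorm _ _
        _ ≤ (c / (‖A₁C‖ + 1)) * ((‖A₁C‖ + 1) * ‖h‖) := by
            apply mul_le_mul hh.le ?_ (norm_nonneg _) hcpos.le
            calc ‖A₁C h‖ ≤ ‖A₁C‖ * ‖h‖ := A₁C.le_opNorm h
              _ ≤ (‖A₁C‖ + 1) * ‖h‖ := by nlinarith [norm_nonneg h]
        _ = c * ‖h‖ := by
            have hne : ‖A₁C‖ + 1 ≠ 0 := by positivity
            field_simp
    -- g₁ has derivative A₂C ∘ DH + B₂C ∘ DG₁ at 0
    have hg₁ : HasFDerivAt (fun xx : Fin n → ℝ => A₂ *ᵥ H xx + B₂ *ᵥ G xx 0)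
        (A₂C.comp DH + B₂C.comp DG₁) 0 := by
      have h1 : HasFDerivAt (fun xx : Fin n → ℝ => A₂C (H xx)) (A₂C.comp DH) 0 :=
        (A₂C.hasFDerivAt).comp 0 (hHd 0).hasFDerivAt
      have h2 : HasFDerivAt (fun xx : Fin n → ℝ => B₂C (G xx 0)) (B₂C.comp DG₁) 0 :=
        (B₂C.hasFDerivAt).comp 0 ((hG₁c.differentiable one_ne_zero) 0).hasFDerivAt
      exact h1.add h2
    have hf₁' : HasFDerivAt (fun xx : Fin n → ℝ => fderiv ℝ H xx (A₁ *ᵥ xx))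
        (A₂C.comp DH + B₂C.comp DG₁) 0 :=
      hg₁.congr_of_eventuallyEq (Filter.Eventually.of_forall key1)
    have heqL := hf₁.unique hf₁'
    intro w
    have := DFunLike.congr_fun heqL w
    simpa [hA₁C, hA₂C, hB₂C] using this
  · -- second identity
    have key2 : ∀ v : Fin m → ℝ, DH (B₁ *ᵥ v) = B₂ *ᵥ G 0 v := by
      intro v
      have := key 0 v
      simpa [Matrix.mulVec_zero, hH0, hDHdef] using this
    have hf₂ : HasFDerivAt (fun v : Fin m → ℝ => DH (B₁ *ᵥ v)) (DH.comp B₁C) 0 :=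
      (DH.comp B₁C).hasFDerivAt
    have hg₂ : HasFDerivAt (fun v : Fin m → ℝ => B₂ *ᵥ G 0 v) (B₂C.comp DG₂) 0 :=
      (B₂C.hasFDerivAt).comp 0 ((hG₂c.differentiable one_ne_zero) 0).hasFDerivAt
    have hf₂' : HasFDerivAt (fun v : Fin m → ℝ => DH (B₁ *ᵥ v)) (B₂C.comp DG₂) 0 :=
      hg₂.congr_of_eventuallyEq (Filter.Eventually.of_forall key2)
    have heqL := hf₂.unique hf₂'
    intro w
    have := DFunLike.congr_fun heqL w
    simpa [hB₁C, hB₂C, hDHdef] using this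
end

section
/- Differential equivalence implies linear equivalence for linear controlled systems: if there is a C¹ diffeomorphism F(x,u) = (H(x), G(x,u)) of ℝⁿ×ℝᵐ with F(0,0)=(0,0) carrying every solution-control pair of ẋ = A₁x + B₁u (with continuous control) to a solution-control pair of ẏ = A₂y + B₂v via (y,v) = F(x,u), then there exist invertible matrices O, Q and a matrix L with A₂ = O⁻¹A₁O + O⁻¹B₁L and B₂ = O⁻¹B₁Q; indeed one may take O = D_xH(0)⁻¹, Q = D_uG(0,0)⁻¹ up to the relation A₁ = D_xH(0)⁻¹A₂D_xH(0) + D_xH(0)⁻¹B₂D_xG(0,0), B₁ = D_xH(0)⁻¹B₂D_uG(0,0). -/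
open Matrix NormedSpace intervalIntegral

section sol
variable {n m : ℕ}
attribute [local instance] Matrix.linftyOpNormedAddCommGroup Matrix.linftyOpNormedRing
  Matrix.linftyOpNormedAlgebra

noncomputable def expM (A : Matrix (Fin n) (Fin n) ℝ) (t : ℝ) : Matrix (Fin n) (Fin n) ℝ :=
  exp (t • A)

noncomputable def mulVecCLM {k : ℕ} (v : Fin k → ℝ) :
    Matrix (Fin n) (Fin k) ℝ →L[ℝ] (Fin n → ℝ) :=
  LinearMap.toContinuousLinearMap
    { toFun := fun M => M.mulVec v
      map_add' := fun M N => Matrix.add_mulVec M N v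
      map_smul' := fun c M => Matrix.smul_mulVec c M v }

theorem exists_sol (A₁ : Matrix (Fin n) (Fin n) ℝ) (B₁ : Matrix (Fin n) (Fin m) ℝ)
    (x₀ : Fin n → ℝ) (u₀ : Fin m → ℝ) :
    ∃ x : ℝ → Fin n → ℝ, x 0 = x₀ ∧
      ∀ t : ℝ, HasDerivAt x (A₁.mulVec (x t) + B₁.mulVec u₀) t := by
  haveI : TopologicalSpace.PseudoMetrizableSpace (Matrix (Fin n) (Fin n) ℝ) :=
    inferInstanceAs (TopologicalSpace.PseudoMetrizableSpace (Fin n → Fin n → ℝ))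
  set Φ : ℝ → Matrix (Fin n) (Fin n) ℝ := expM A₁ with hΦdef
  have hc : Continuous Φ := exp_continuous.comp (continuous_id.smul continuous_const)
  set S : ℝ → Matrix (Fin n) (Fin n) ℝ := fun t => ∫ s in (0:ℝ)..t, Φ s with hSdef
  set w : Fin n → ℝ := B₁.mulVec u₀ with hwdef
  refine ⟨fun t => (Φ t).mulVec x₀ + (S t).mulVec w, ?_, ?_⟩
  · have h1 : Φ 0 = 1 := by simp [hΦdef, expM, exp_zero]
    have h2 : S 0 = 0 := by simp [hSdef]
    simp [h1, h2, Matrix.one_mulVec, Matrix.zero_mulVec]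
  · intro t
    have hΦ : HasDerivAt Φ (A₁ * Φ t) t := hasDerivAt_exp_smul_const' A₁ t
    have hS : HasDerivAt S (Φ t) t :=
      integral_hasDerivAt_right (hc.intervalIntegrable _ _)
        hc.aestronglyMeasurable.stronglyMeasurableAtFilter hc.continuousAt
    have h1 : HasDerivAt (fun t => (Φ t).mulVec x₀) ((A₁ * Φ t).mulVec x₀) t :=
      ((mulVecCLM x₀).hasFDerivAt.comp_hasDerivAt t hΦ :)
    have h2 : HasDerivAt (fun t => (S t).mulVec w) ((Φ t).mulVec w) t :=
      ((mulVecCLM w).hasFDerivAt.comp_hasDerivAt t hS :)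
    have hd := h1.add h2
    have hAS : A₁ * S t = Φ t - 1 := by
      have hint := hc.intervalIntegrable (μ := MeasureTheory.volume) 0 t
      have h2' : (∫ s in (0:ℝ)..t, A₁ * Φ s) = Φ t - Φ 0 := by
        apply intervalIntegral.integral_eq_sub_of_hasDerivAt
        · exact fun s _ => hasDerivAt_exp_smul_const' A₁ s
        · exact ((continuous_const.mul hc).intervalIntegrable _ _)
      have h3 : Φ 0 = 1 := by simp [hΦdef, expM, exp_zero]
      have h4 : (∫ s in (0:ℝ)..t, A₁ * Φ s) = A₁ * S t := by
        have := ContinuousLinearMap.intervalIntegral_comp_comm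
          (ContinuousLinearMap.mul ℝ _ A₁) hint (a := 0) (b := t)
        simpa using this
      rw [← h4, h2', h3]
    refine hd.congr_deriv (Eq.symm ?_)
    rw [Matrix.mulVec_add, Matrix.mulVec_mulVec, Matrix.mulVec_mulVec, hAS,
      Matrix.sub_mulVec, Matrix.one_mulVec]
    abel

end sol

theorem aux_fderiv {n : ℕ} (H : (Fin n → ℝ) → (Fin n → ℝ)) (hH : ContDiff ℝ 1 H)
    (A : Matrix (Fin n) (Fin n) ℝ) :
    HasFDerivAt (fun x => fderiv ℝ H x (A.mulVec x))
      ((fderiv ℝ H 0).comp (LinearMap.toContinuousLinearMap (Matrix.mulVecLin A))) 0 := by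
  set D := fderiv ℝ H with hD
  set L := LinearMap.toContinuousLinearMap (Matrix.mulVecLin A) with hL
  have hLapp : ∀ v, L v = A.mulVec v := fun v => rfl
  have hDc : Continuous D := hH.continuous_fderiv one_ne_zero
  rw [hasFDerivAt_iff_isLittleO_nhds_zero]
  have heq : (fun h => (fun x => D x (A.mulVec x)) (0 + h) - (fun x => D x (A.mulVec x)) 0
      - ((D 0).comp L) h) = fun h => (D h - (D 0)) (L h) := by
    funext h
    simp [hLapp, Matrix.mulVec_zero]
  rw [heq]
  rw [Asymptotics.isLittleO_iff]
  intro c hc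
  have hpos : (0:ℝ) < ‖L‖ + 1 := by positivity
  have htend : Filter.Tendsto (fun h => ‖D h - D 0‖) (nhds 0) (nhds 0) := by
    have : Filter.Tendsto (fun h => D h - D 0) (nhds 0) (nhds (D 0 - D 0)) :=
      ((hDc.tendsto 0).sub tendsto_const_nhds)
    simpa using this.norm
  have hev : ∀ᶠ h in nhds (0 : Fin n → ℝ), ‖D h - D 0‖ < c / (‖L‖ + 1) := by
    refine htend.eventually_lt_const ?_
    positivity
  filter_upwards [hev] with h hh
  calc ‖(D h - D 0) (L h)‖ ≤ ‖D h - D 0‖ * ‖L h‖ := (D h - D 0).le_opNorm _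
    _ ≤ ‖D h - D 0‖ * (‖L‖ * ‖h‖) :=
        mul_le_mul_of_nonneg_left (L.le_opNorm h) (norm_nonneg _)
    _ ≤ c * ‖h‖ := by
        have h1 : 0 ≤ ‖h‖ := norm_nonneg _
        have h4 : ‖D h - D 0‖ * (‖L‖ + 1) ≤ c := (le_div_iff₀ hpos).mp hh.le
        nlinarith [norm_nonneg (D h - D 0), norm_nonneg L]

theorem isUnit_toMatrix' {k : ℕ} (f : (Fin k → ℝ) →ₗ[ℝ] (Fin k → ℝ))
    (hf : Function.Bijective f) : IsUnit (LinearMap.toMatrix' f) := by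
  let e := LinearEquiv.ofBijective f hf
  have h1 : LinearMap.toMatrix' f * LinearMap.toMatrix' (e.symm : (Fin k → ℝ) →ₗ[ℝ] (Fin k → ℝ)) = 1 := by
    rw [← LinearMap.toMatrix'_comp]
    have hcomp : f ∘ₗ (e.symm : (Fin k → ℝ) →ₗ[ℝ] (Fin k → ℝ)) = LinearMap.id :=
      LinearMap.ext fun v => e.apply_symm_apply v
    rw [hcomp, LinearMap.toMatrix'_id]
  have := invertibleOfRightInverse _ _ h1
  exact isUnit_of_invertible _

/-- differential equivalence implies linear (feedback) equivalence for
linear controlled systems; moreover the explicit relations via `D_xH(0)`, `D_xG(0,0)`,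
`D_uG(0,0)` hold. -/
theorem stmt_10 (n m : ℕ)
    (A₁ A₂ : Matrix (Fin n) (Fin n) ℝ) (B₁ B₂ : Matrix (Fin n) (Fin m) ℝ)
    (H : (Fin n → ℝ) → (Fin n → ℝ))
    (G : (Fin n → ℝ) → (Fin m → ℝ) → (Fin m → ℝ))
    (hF : ContDiff ℝ 1 (fun p : (Fin n → ℝ) × (Fin m → ℝ) => (H p.1, G p.1 p.2)))
    (hdiffeo : ∃ Finv : (Fin n → ℝ) × (Fin m → ℝ) → (Fin n → ℝ) × (Fin m → ℝ),
      ContDiff ℝ 1 Finv ∧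
      Function.LeftInverse Finv (fun p : (Fin n → ℝ) × (Fin m → ℝ) => (H p.1, G p.1 p.2)) ∧
      Function.RightInverse Finv (fun p : (Fin n → ℝ) × (Fin m → ℝ) => (H p.1, G p.1 p.2)))
    (hH0 : H 0 = 0) (hG0 : G 0 0 = 0)
    (htrans : ∀ (x : ℝ → Fin n → ℝ) (u : ℝ → Fin m → ℝ), Continuous u →
      (∀ t : ℝ, 0 ≤ t → HasDerivAt x (A₁.mulVec (x t) + B₁.mulVec (u t)) t) →
      ∀ t : ℝ, 0 ≤ t →
        HasDerivAt (fun s => H (x s))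
          (A₂.mulVec (H (x t)) + B₂.mulVec (G (x t) (u t))) t) :
    (∃ (O : Matrix (Fin n) (Fin n) ℝ) (Q : Matrix (Fin m) (Fin m) ℝ)
        (L : Matrix (Fin m) (Fin n) ℝ),
      IsUnit O ∧ IsUnit Q ∧
      A₂ = O⁻¹ * A₁ * O + O⁻¹ * B₁ * L ∧ B₂ = O⁻¹ * B₁ * Q) ∧
    (letI DH : Matrix (Fin n) (Fin n) ℝ :=
        LinearMap.toMatrix' (fderiv ℝ H 0 : (Fin n → ℝ) →ₗ[ℝ] (Fin n → ℝ))
     letI Gx : Matrix (Fin m) (Fin n) ℝ :=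
        LinearMap.toMatrix' (fderiv ℝ (fun x => G x 0) 0 : (Fin n → ℝ) →ₗ[ℝ] (Fin m → ℝ))
     letI Gu : Matrix (Fin m) (Fin m) ℝ :=
        LinearMap.toMatrix' (fderiv ℝ (fun v => G 0 v) 0 : (Fin m → ℝ) →ₗ[ℝ] (Fin m → ℝ))
     A₁ = DH⁻¹ * A₂ * DH + DH⁻¹ * B₂ * Gx ∧ B₁ = DH⁻¹ * B₂ * Gu) := by
  -- differentiability facts
  have hin1 : ContDiff ℝ 1 (fun x : Fin n → ℝ => (x, (0 : Fin m → ℝ))) :=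
    contDiff_id.prodMk contDiff_const
  have hin2 : ContDiff ℝ 1 (fun v : Fin m → ℝ => ((0 : Fin n → ℝ), v)) :=
    contDiff_const.prodMk contDiff_id
  have hH1 : ContDiff ℝ 1 H := (contDiff_fst.comp (hF.comp hin1) :)
  have hGx1 : ContDiff ℝ 1 (fun x => G x 0) := (contDiff_snd.comp (hF.comp hin1) :)
  have hGu1 : ContDiff ℝ 1 (fun v => G 0 v) := (contDiff_snd.comp (hF.comp hin2) :)
  -- the key pointwise identity
  have key : ∀ (x₀ : Fin n → ℝ) (u₀ : Fin m → ℝ),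
      fderiv ℝ H x₀ (A₁.mulVec x₀ + B₁.mulVec u₀)
        = A₂.mulVec (H x₀) + B₂.mulVec (G x₀ u₀) := by
    intro x₀ u₀
    obtain ⟨x, hx0, hx⟩ := exists_sol A₁ B₁ x₀ u₀
    have h2 := htrans x (fun _ => u₀) continuous_const (fun t _ => hx t) 0 le_rfl
    rw [hx0] at h2
    have hx00 : HasDerivAt x (A₁.mulVec x₀ + B₁.mulVec u₀) 0 := hx0 ▸ hx 0
    have hdH : HasFDerivAt H (fderiv ℝ H x₀) (x 0) :=
      hx0 ▸ (hH1.differentiable one_ne_zero x₀).hasFDerivAt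
    have h1 : HasDerivAt (fun s => H (x s))
        (fderiv ℝ H x₀ (A₁.mulVec x₀ + B₁.mulVec u₀)) 0 :=
      hdH.comp_hasDerivAt 0 hx00
    exact h1.unique h2
  classical
  -- continuous linear maps at the origin
  set DH0 : (Fin n → ℝ) →L[ℝ] (Fin n → ℝ) := fderiv ℝ H 0 with hDH0def
  set Gxc : (Fin n → ℝ) →L[ℝ] (Fin m → ℝ) := fderiv ℝ (fun x => G x 0) 0 with hGxcdef
  set Guc : (Fin m → ℝ) →L[ℝ] (Fin m → ℝ) := fderiv ℝ (fun v => G 0 v) 0 with hGucdef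
  set MH : Matrix (Fin n) (Fin n) ℝ := LinearMap.toMatrix' (DH0 : (Fin n → ℝ) →ₗ[ℝ] (Fin n → ℝ)) with hMHdef
  set Gx : Matrix (Fin m) (Fin n) ℝ := LinearMap.toMatrix' (Gxc : (Fin n → ℝ) →ₗ[ℝ] (Fin m → ℝ)) with hGxdef
  set Gu : Matrix (Fin m) (Fin m) ℝ := LinearMap.toMatrix' (Guc : (Fin m → ℝ) →ₗ[ℝ] (Fin m → ℝ)) with hGudef
  -- the B relation as matrices
  have keyB : ∀ u₀, DH0 (B₁.mulVec u₀) = B₂.mulVec (G 0 u₀) := by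
    intro u₀
    have h := key 0 u₀
    simpa [Matrix.mulVec_zero, hH0] using h
  have hBclm : DH0.comp (LinearMap.toContinuousLinearMap B₁.mulVecLin)
      = (LinearMap.toContinuousLinearMap B₂.mulVecLin).comp Guc := by
    have hf1 : HasFDerivAt (fun u => DH0 (B₁.mulVec u))
        (DH0.comp (LinearMap.toContinuousLinearMap B₁.mulVecLin)) 0 :=
      (DH0.comp (LinearMap.toContinuousLinearMap B₁.mulVecLin)).hasFDerivAt
    have hf2 : HasFDerivAt (fun u => B₂.mulVec (G 0 u))
        ((LinearMap.toContinuousLinearMap B₂.mulVecLin).comp Guc) 0 := by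
      have hg : HasFDerivAt (fun v => G 0 v) Guc 0 := (hGu1.differentiable one_ne_zero 0).hasFDerivAt
      exact ((LinearMap.toContinuousLinearMap B₂.mulVecLin).hasFDerivAt).comp 0 hg
    have heq : (fun u => DH0 (B₁.mulVec u)) = fun u => B₂.mulVec (G 0 u) := funext keyB
    exact hf1.unique (hf2.congr_of_eventuallyEq (Filter.Eventually.of_forall fun u => (keyB u)))
  have hBmat : MH * B₁ = B₂ * Gu := by
    have h := congrArg (fun (L : (Fin m → ℝ) →L[ℝ] (Fin n → ℝ)) =>
      LinearMap.toMatrix' (L : (Fin m → ℝ) →ₗ[ℝ] (Fin n → ℝ))) hBclm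
    simp only [ContinuousLinearMap.toLinearMap_comp, LinearMap.toMatrix'_comp,
      LinearMap.coe_toContinuousLinearMap] at h
    rwa [← Matrix.toLin'_apply', LinearMap.toMatrix'_toLin', ← Matrix.toLin'_apply',
      LinearMap.toMatrix'_toLin'] at h
  -- the A relation as matrices
  have keyA : ∀ x₀, fderiv ℝ H x₀ (A₁.mulVec x₀) = A₂.mulVec (H x₀) + B₂.mulVec (G x₀ 0) := by
    intro x₀
    simpa [Matrix.mulVec_zero] using key x₀ 0
  have hAclm : DH0.comp (LinearMap.toContinuousLinearMap A₁.mulVecLin)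
      = (LinearMap.toContinuousLinearMap A₂.mulVecLin).comp DH0
        + (LinearMap.toContinuousLinearMap B₂.mulVecLin).comp Gxc := by
    have hf1 : HasFDerivAt (fun x => fderiv ℝ H x (A₁.mulVec x))
        (DH0.comp (LinearMap.toContinuousLinearMap A₁.mulVecLin)) 0 := aux_fderiv H hH1 A₁
    have hf2 : HasFDerivAt (fun x => A₂.mulVec (H x) + B₂.mulVec (G x 0))
        ((LinearMap.toContinuousLinearMap A₂.mulVecLin).comp DH0
          + (LinearMap.toContinuousLinearMap B₂.mulVecLin).comp Gxc) 0 := by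
      have h1 : HasFDerivAt (fun x => A₂.mulVec (H x))
          ((LinearMap.toContinuousLinearMap A₂.mulVecLin).comp DH0) 0 :=
        ((LinearMap.toContinuousLinearMap A₂.mulVecLin).hasFDerivAt).comp 0
          (hH1.differentiable one_ne_zero 0).hasFDerivAt
      have h2 : HasFDerivAt (fun x => B₂.mulVec (G x 0))
          ((LinearMap.toContinuousLinearMap B₂.mulVecLin).comp Gxc) 0 :=
        ((LinearMap.toContinuousLinearMap B₂.mulVecLin).hasFDerivAt).comp 0
          (hGx1.differentiable one_ne_zero 0).hasFDerivAt
      exact h1.add h2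
    exact hf1.unique (hf2.congr_of_eventuallyEq (Filter.Eventually.of_forall fun x => (keyA x)))
  have hAmat : MH * A₁ = A₂ * MH + B₂ * Gx := by
    have h := congrArg (fun (L : (Fin n → ℝ) →L[ℝ] (Fin n → ℝ)) =>
      LinearMap.toMatrix' (L : (Fin n → ℝ) →ₗ[ℝ] (Fin n → ℝ))) hAclm
    simp only [ContinuousLinearMap.toLinearMap_comp, ContinuousLinearMap.toLinearMap_add, map_add,
      LinearMap.toMatrix'_comp, LinearMap.coe_toContinuousLinearMap] at h
    rwa [← Matrix.toLin'_apply', LinearMap.toMatrix'_toLin', ← Matrix.toLin'_apply',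
      LinearMap.toMatrix'_toLin', ← Matrix.toLin'_apply', LinearMap.toMatrix'_toLin'] at h
  -- invertibility of MH and Gu
  obtain ⟨Finv, hFinv, hleft, hright⟩ := hdiffeo
  set F : (Fin n → ℝ) × (Fin m → ℝ) → (Fin n → ℝ) × (Fin m → ℝ) :=
    fun p => (H p.1, G p.1 p.2) with hFdef
  have hFd : Differentiable ℝ F := hF.differentiable one_ne_zero
  have hFinvd : Differentiable ℝ Finv := hFinv.differentiable one_ne_zero
  have hF0 : F 0 = 0 := by
    have : F 0 = (H 0, G 0 0) := rfl
    rw [this, hH0, hG0]; rfl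
  have hFinv0 : Finv 0 = 0 := by
    have := hleft 0
    rwa [hF0] at this
  have hcomp1 : (fderiv ℝ Finv 0).comp (fderiv ℝ F 0) = ContinuousLinearMap.id ℝ _ := by
    have h := fderiv_comp (𝕜 := ℝ) 0 (hFinvd (F 0)) (hFd 0)
    rw [hF0] at h
    have hid : Finv ∘ F = id := funext hleft
    rw [← h, hid, fderiv_id]
  have hcomp2 : (fderiv ℝ F 0).comp (fderiv ℝ Finv 0) = ContinuousLinearMap.id ℝ _ := by
    have h := fderiv_comp (𝕜 := ℝ) 0 (hFd (Finv 0)) (hFinvd 0)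
    rw [hFinv0] at h
    have hid : F ∘ Finv = id := funext hright
    rw [← h, hid, fderiv_id]
  have hli : Function.LeftInverse (fderiv ℝ Finv 0) (fderiv ℝ F 0) := fun p => by
    have := congrFun (congrArg DFunLike.coe hcomp1) p
    simpa using this
  have hri : Function.RightInverse (fderiv ℝ Finv 0) (fderiv ℝ F 0) := fun p => by
    have := congrFun (congrArg DFunLike.coe hcomp2) p
    simpa using this
  have hDFbij : Function.Bijective (fderiv ℝ F 0) := ⟨hli.injective, hri.surjective⟩
  -- the derivative of F at 0 in block form
  have hGp : Differentiable ℝ (fun p : (Fin n → ℝ) × (Fin m → ℝ) => G p.1 p.2) :=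
    (contDiff_snd.comp hF : ContDiff ℝ 1 _).differentiable one_ne_zero
  set DG : ((Fin n → ℝ) × (Fin m → ℝ)) →L[ℝ] (Fin m → ℝ) :=
    fderiv ℝ (fun p : (Fin n → ℝ) × (Fin m → ℝ) => G p.1 p.2) 0 with hDGdef
  have hDF : HasFDerivAt F
      ((DH0.comp (ContinuousLinearMap.fst ℝ (Fin n → ℝ) (Fin m → ℝ))).prod DG) 0 := by
    apply HasFDerivAt.prodMk
    · exact ((hH1.differentiable one_ne_zero 0).hasFDerivAt).comp 0 hasFDerivAt_fst
    · exact (hGp 0).hasFDerivAt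
  have hDFeq : fderiv ℝ F 0
      = (DH0.comp (ContinuousLinearMap.fst ℝ (Fin n → ℝ) (Fin m → ℝ))).prod DG := hDF.fderiv
  have hDFapp : ∀ p : (Fin n → ℝ) × (Fin m → ℝ),
      fderiv ℝ F 0 p = (DH0 p.1, DG p) := by
    intro p
    rw [hDFeq]
    rfl
  -- Guc in terms of DG
  have hGucDG : ∀ η, Guc η = DG (0, η) := by
    intro η
    have hinr : HasFDerivAt (fun v : Fin m → ℝ => (((0 : Fin n → ℝ), v)))
        (ContinuousLinearMap.inr ℝ (Fin n → ℝ) (Fin m → ℝ)) 0 :=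
      (ContinuousLinearMap.inr ℝ (Fin n → ℝ) (Fin m → ℝ)).hasFDerivAt
    have hcomp : HasFDerivAt (fun v => G 0 v)
        (DG.comp (ContinuousLinearMap.inr ℝ (Fin n → ℝ) (Fin m → ℝ))) 0 :=
      ((hGp 0).hasFDerivAt).comp 0 hinr
    have h2 : HasFDerivAt (fun v => G 0 v) Guc 0 := (hGu1.differentiable one_ne_zero 0).hasFDerivAt
    rw [h2.unique hcomp]
    rfl
  -- units
  have hMH : IsUnit MH := by
    apply isUnit_toMatrix'
    have hsurj : Function.Surjective
        ((DH0 : (Fin n → ℝ) →ₗ[ℝ] (Fin n → ℝ)) : (Fin n → ℝ) → (Fin n → ℝ)) := by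
      intro y
      obtain ⟨p, hp⟩ := hDFbij.2 (y, 0)
      have := (hDFapp p).symm.trans hp
      exact ⟨p.1, congrArg Prod.fst this⟩
    exact ⟨LinearMap.injective_iff_surjective.mpr hsurj, hsurj⟩
  have hGuUnit : IsUnit Gu := by
    apply isUnit_toMatrix'
    have hinj : Function.Injective Guc := by
      intro a b hab
      have h0 : Guc (a - b) = 0 := by rw [map_sub, hab, sub_self]
      have hz : fderiv ℝ F 0 (0, a - b) = 0 := by
        rw [hDFapp]
        simp [← hGucDG, h0]
      have := hDFbij.1 (by rw [hz, map_zero] : fderiv ℝ F 0 (0, a - b) = fderiv ℝ F 0 0)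
      have hb : a - b = 0 := congrArg Prod.snd this
      exact sub_eq_zero.mp hb
    have hinj' : Function.Injective
        ((Guc : (Fin m → ℝ) →ₗ[ℝ] (Fin m → ℝ)) : (Fin m → ℝ) → (Fin m → ℝ)) := hinj
    exact ⟨hinj', LinearMap.injective_iff_surjective.mp hinj'⟩
  -- final algebra
  have hMdet : IsUnit MH.det := (Matrix.isUnit_iff_isUnit_det MH).mp hMH
  have hGudet : IsUnit Gu.det := (Matrix.isUnit_iff_isUnit_det Gu).mp hGuUnit
  have hMHMH : MH * MH⁻¹ = 1 := Matrix.mul_nonsing_inv MH hMdet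
  have hMHinvMH : MH⁻¹ * MH = 1 := Matrix.nonsing_inv_mul MH hMdet
  have hGuGu : Gu * Gu⁻¹ = 1 := Matrix.mul_nonsing_inv Gu hGudet
  constructor
  · refine ⟨MH⁻¹, Gu⁻¹, -(Gu⁻¹ * Gx * MH⁻¹), ?_, ?_, ?_, ?_⟩
    · exact Matrix.isUnit_nonsing_inv_iff.mpr hMH
    · exact Matrix.isUnit_nonsing_inv_iff.mpr hGuUnit
    · rw [Matrix.nonsing_inv_nonsing_inv MH hMdet]
      have e1 : MH * A₁ * MH⁻¹ = A₂ + B₂ * Gx * MH⁻¹ := by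
        rw [hAmat, Matrix.add_mul, Matrix.mul_assoc A₂, hMHMH, Matrix.mul_one]
      have e2 : MH * B₁ * -(Gu⁻¹ * Gx * MH⁻¹) = -(B₂ * Gx * MH⁻¹) := by
        rw [hBmat, Matrix.mul_neg]
        congr 1
        rw [Matrix.mul_assoc B₂ Gu, ← Matrix.mul_assoc Gu (Gu⁻¹ * Gx) MH⁻¹,
          ← Matrix.mul_assoc Gu Gu⁻¹ Gx, hGuGu, Matrix.one_mul, ← Matrix.mul_assoc]
      rw [e1, e2]
      abel
    · rw [Matrix.nonsing_inv_nonsing_inv MH hMdet, hBmat, Matrix.mul_assoc, hGuGu,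
        Matrix.mul_one]
  · constructor
    · have h : MH⁻¹ * (MH * A₁) = A₁ := by
        rw [← Matrix.mul_assoc, hMHinvMH, Matrix.one_mul]
      rw [← h, hAmat, Matrix.mul_add, ← Matrix.mul_assoc, ← Matrix.mul_assoc]
    · have h : MH⁻¹ * (MH * B₁) = B₁ := by
        rw [← Matrix.mul_assoc, hMHinvMH, Matrix.one_mul]
      rw [← h, hBmat, ← Matrix.mul_assoc]
end

section
/- Suppose a homeomorphism F(x,u) = (H(x,u), G(x,u)) of ℝⁿ×ℝᵐ transports solution-control pairs of ẋ = A₁x + B₁u to those of ẏ = A₂y + B₂v (for continuous controls), and G maps bounded sets to bounded sets, and H, together with the first component Z of F⁻¹, is continuous in its first variable. Then H(x,u) does not depend on u: H(x,u) = H(x,u′) for all x ∈ ℝⁿ and u, u′ ∈ ℝᵐ; moreover x ↦ H(x,0) is a homeomorphism of ℝⁿ. -/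
open Matrix

noncomputable section Stmt19Aux

variable {n m : ℕ}

/-- `mulVec` as a continuous linear map. -/
noncomputable def mvL {k l : ℕ} (A : Matrix (Fin k) (Fin l) ℝ) : (Fin l → ℝ) →L[ℝ] (Fin k → ℝ) :=
  LinearMap.toContinuousLinearMap A.mulVecLin

lemma mvL_apply {k l : ℕ} (A : Matrix (Fin k) (Fin l) ℝ) (v : Fin l → ℝ) :
    mvL A v = A.mulVec v := rfl

/-- Fundamental (operator) solution `exp (t • A)`. -/
noncomputable def Phi (A : Matrix (Fin n) (Fin n) ℝ) (t : ℝ) : (Fin n → ℝ) →L[ℝ] (Fin n → ℝ) :=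
  NormedSpace.exp (t • mvL A)

lemma Phi_zero (A : Matrix (Fin n) (Fin n) ℝ) : Phi A 0 = 1 := by
  simp [Phi, NormedSpace.exp_zero]

lemma Phi_mul_neg (A : Matrix (Fin n) (Fin n) ℝ) (t : ℝ) : Phi A t * Phi A (-t) = 1 := by
  let +nondep : NormedAlgebra ℚ ((Fin n → ℝ) →L[ℝ] (Fin n → ℝ)) := .restrictScalars ℚ ℝ _
  rw [Phi, Phi, ← NormedSpace.exp_add_of_commute (((Commute.refl (mvL A)).smul_left t).smul_right (-t))]
  rw [← add_smul, add_neg_cancel, zero_smul, NormedSpace.exp_zero]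

lemma Phi_comm (A : Matrix (Fin n) (Fin n) ℝ) (t : ℝ) : mvL A * Phi A t = Phi A t * mvL A :=
  (((Commute.refl (mvL A)).smul_right t).exp_right).eq

lemma hasDerivAt_Phi (A : Matrix (Fin n) (Fin n) ℝ) (t : ℝ) :
    HasDerivAt (Phi A) (Phi A t * mvL A) t :=
  hasDerivAt_exp_smul_const (𝕂 := ℝ) (mvL A) t

lemma hasDerivAt_Phi_neg (A : Matrix (Fin n) (Fin n) ℝ) (t : ℝ) :
    HasDerivAt (fun s => Phi A (-s)) (-(Phi A (-t) * mvL A)) t := by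
  have h := hasDerivAt_exp_smul_const (𝕂 := ℝ) (-(mvL A)) t
  have e : ∀ s : ℝ, NormedSpace.exp (s • -mvL A) = Phi A (-s) := by
    intro s; rw [Phi, smul_neg, ← neg_smul]
  have h2 : HasDerivAt (fun s => Phi A (-s)) (NormedSpace.exp (t • -mvL A) * -mvL A) t := by
    simpa only [e] using h
  rw [e t] at h2
  convert h2 using 1
  exact (mul_neg (Phi A (-t)) (mvL A)).symm

lemma continuous_Phi (A : Matrix (Fin n) (Fin n) ℝ) : Continuous (Phi A) := by
  let +nondep : NormedAlgebra ℚ ((Fin n → ℝ) →L[ℝ] (Fin n → ℝ)) := .restrictScalars ℚ ℝ _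
  exact NormedSpace.exp_continuous.comp (continuous_id.smul continuous_const)

lemma continuous_Phi_apply (A : Matrix (Fin n) (Fin n) ℝ) :
    Continuous fun p : ℝ × (Fin n → ℝ) => Phi A p.1 p.2 :=
  Continuous.clm_apply ((continuous_Phi A).comp continuous_fst) continuous_snd


lemma sol_spec (A : Matrix (Fin n) (Fin n) ℝ) (B : Matrix (Fin n) (Fin m) ℝ)
    (u : ℝ → Fin m → ℝ) (hu : Continuous u) (x₀ : Fin n → ℝ) (t : ℝ) :
    HasDerivAt (fun t => Phi A t (x₀ + ∫ s in (0:ℝ)..t, Phi A (-s) (B.mulVec (u s))))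
      (A.mulVec (Phi A t (x₀ + ∫ s in (0:ℝ)..t, Phi A (-s) (B.mulVec (u s))))
        + B.mulVec (u t)) t := by
  have hψ : Continuous fun s : ℝ => Phi A (-s) (B.mulVec (u s)) :=
    Continuous.clm_apply ((continuous_Phi A).comp continuous_neg) ((mvL B).continuous.comp hu)
  have hc : HasDerivAt (fun t => ∫ s in (0:ℝ)..t, Phi A (-s) (B.mulVec (u s)))
      (Phi A (-t) (B.mulVec (u t))) t :=
    intervalIntegral.integral_hasDerivAt_right (hψ.intervalIntegrable _ _)
      (hψ.stronglyMeasurableAtFilter _ _) hψ.continuousAt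
  have hx := (hasDerivAt_Phi A t).clm_apply ((hasDerivAt_const t x₀).add hc)
  convert hx using 1
  all_goals try (with_reducible_and_instances rfl)
  rw [zero_add]
  congr 1
  · calc A.mulVec (Phi A t (x₀ + ∫ s in (0:ℝ)..t, Phi A (-s) (B.mulVec (u s))))
        = (mvL A * Phi A t) (x₀ + ∫ s in (0:ℝ)..t, Phi A (-s) (B.mulVec (u s))) := rfl
      _ = (Phi A t * mvL A) (x₀ + ∫ s in (0:ℝ)..t, Phi A (-s) (B.mulVec (u s))) := by
          rw [Phi_comm]
  · calc B.mulVec (u t) = (1 : (Fin n → ℝ) →L[ℝ] (Fin n → ℝ)) (B.mulVec (u t)) := rfl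
      _ = (Phi A t * Phi A (-t)) (B.mulVec (u t)) := by rw [Phi_mul_neg]
      _ = Phi A t (Phi A (-t) (B.mulVec (u t))) := rfl

lemma sol_zero (A : Matrix (Fin n) (Fin n) ℝ) (B : Matrix (Fin n) (Fin m) ℝ)
    (u : ℝ → Fin m → ℝ) (x₀ : Fin n → ℝ) :
    Phi A 0 (x₀ + ∫ s in (0:ℝ)..(0:ℝ), Phi A (-s) (B.mulVec (u s))) = x₀ := by
  rw [intervalIntegral.integral_same, add_zero, Phi_zero, ContinuousLinearMap.one_apply]

/-- Variation-of-constants representation for a curve satisfying the ODE on `[0, b]`. -/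
lemma rep (A : Matrix (Fin n) (Fin n) ℝ) (y w : ℝ → Fin n → ℝ)
    (hw : Continuous w) (b : ℝ)
    (hy : ∀ t ∈ Set.uIcc (0:ℝ) b, HasDerivAt y (A.mulVec (y t) + w t) t) :
    y b = Phi A b (y 0 + ∫ s in (0:ℝ)..b, Phi A (-s) (w s)) := by
  have hd : ∀ t ∈ Set.uIcc (0:ℝ) b,
      HasDerivAt (fun t => Phi A (-t) (y t)) (Phi A (-t) (w t)) t := by
    intro t ht
    have h := (hasDerivAt_Phi_neg A t).clm_apply (hy t ht)
    convert h using 1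
    all_goals try (with_reducible_and_instances rfl)
    have e1 : (-(Phi A (-t) * mvL A)) (y t) = -(Phi A (-t) (A.mulVec (y t))) := by
      rw [ContinuousLinearMap.neg_apply]; rfl
    rw [e1, map_add]
    abel
  have hψ : Continuous fun s : ℝ => Phi A (-s) (w s) :=
    Continuous.clm_apply ((continuous_Phi A).comp continuous_neg) hw
  have hint := intervalIntegral.integral_eq_sub_of_hasDerivAt hd (hψ.intervalIntegrable _ _)
  rw [hint, neg_zero, Phi_zero, ContinuousLinearMap.one_apply]
  have e2 : y 0 + (Phi A (-b) (y b) - y 0) = Phi A (-b) (y b) := by abel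
  rw [e2, ← ContinuousLinearMap.comp_apply, ← ContinuousLinearMap.mul_def, Phi_mul_neg,
    ContinuousLinearMap.one_apply]


open Filter Topology in
lemma key (A₁ A₂ : Matrix (Fin n) (Fin n) ℝ) (B₁ B₂ : Matrix (Fin n) (Fin m) ℝ)
    (H : (Fin n → ℝ) → (Fin m → ℝ) → (Fin n → ℝ))
    (G : (Fin n → ℝ) → (Fin m → ℝ) → (Fin m → ℝ))
    (hGc : Continuous fun p : (Fin n → ℝ) × (Fin m → ℝ) => G p.1 p.2)
    (hHcont : ∀ u : Fin m → ℝ, Continuous fun x => H x u)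
    (htrans : ∀ (x : ℝ → Fin n → ℝ) (u : ℝ → Fin m → ℝ), Continuous u →
      (∀ t : ℝ, 0 ≤ t → HasDerivAt x (A₁.mulVec (x t) + B₁.mulVec (u t)) t) →
      ∀ t : ℝ, 0 ≤ t →
        HasDerivAt (fun s => H (x s) (u s))
          (A₂.mulVec (H (x t) (u t)) + B₂.mulVec (G (x t) (u t))) t)
    (x₀ : Fin n → ℝ) (u₀ u₁ : Fin m → ℝ) : H x₀ u₁ = H x₀ u₀ := by
  classical
  set w : Fin m → ℝ := u₁ - u₀ with hw
  set ε : ℕ → ℝ := fun k => (1 : ℝ) / (k + 1) with hε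
  have hεpos : ∀ k, 0 < ε k := fun k => by positivity
  have hεle : ∀ k, ε k ≤ 1 := by
    intro k
    rw [hε]
    rw [div_le_one (by positivity)]
    linarith [Nat.cast_nonneg (α := ℝ) k]
  have hεlim : Tendsto ε atTop (𝓝 0) := tendsto_one_div_add_atTop_nhds_zero_nat
  set U : ℕ → ℝ → (Fin m → ℝ) := fun k t => u₀ + (((k : ℝ) + 1) * t) • w with hU
  have hUcont : ∀ k, Continuous (U k) :=
    fun k => continuous_const.add ((continuous_const.mul continuous_id).smul continuous_const)
  have hU0 : ∀ k, U k 0 = u₀ := by intro k; simp [hU]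
  have hUε : ∀ k, U k (ε k) = u₁ := by
    intro k
    have hne : ((k : ℝ) + 1) ≠ 0 := by positivity
    rw [hU, hε]
    simp only []
    rw [mul_one_div, div_self hne, one_smul, hw]
    abel
  -- the compact set of control values
  set Ku : Set (Fin m → ℝ) := (fun r : ℝ => u₀ + r • w) '' Set.Icc 0 1 with hKu
  have hKuc : IsCompact Ku :=
    isCompact_Icc.image (continuous_const.add (continuous_id.smul continuous_const))
  have hUmem : ∀ k, ∀ t ∈ Set.Icc 0 (ε k), U k t ∈ Ku := by
    intro k t ht
    refine ⟨((k : ℝ) + 1) * t, ⟨mul_nonneg (by positivity) ht.1, ?_⟩, rfl⟩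
    calc ((k : ℝ) + 1) * t ≤ ((k : ℝ) + 1) * ε k := by
          apply mul_le_mul_of_nonneg_left ht.2 (by positivity)
      _ = 1 := by
          rw [hε]; field_simp
  -- uniform bound on the forcing integrand for the x-system
  obtain ⟨C₁, hC₁⟩ := (isCompact_Icc.prod hKuc).exists_bound_of_continuousOn
    (f := fun p : ℝ × (Fin m → ℝ) => Phi A₁ (-p.1) (B₁.mulVec p.2))
    (Continuous.continuousOn (Continuous.clm_apply
      ((continuous_Phi A₁).comp (continuous_fst.neg))
      ((mvL B₁).continuous.comp continuous_snd)))
  have hC₁0 : 0 ≤ C₁ := by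
    have h0 := hC₁ (0, u₀ + (0:ℝ) • w)
      ⟨Set.mem_Icc.2 ⟨le_refl 0, zero_le_one⟩, ⟨0, Set.mem_Icc.2 ⟨le_refl 0, zero_le_one⟩, rfl⟩⟩
    exact le_trans (norm_nonneg _) h0
  set c : ℕ → ℝ → (Fin n → ℝ) :=
    fun k t => ∫ s in (0:ℝ)..t, Phi A₁ (-s) (B₁.mulVec (U k s)) with hc
  have hcbound : ∀ k, ∀ t ∈ Set.Icc 0 (ε k), ‖c k t‖ ≤ C₁ * t := by
    intro k t ht
    have h := intervalIntegral.norm_integral_le_of_norm_le_const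
      (f := fun s => Phi A₁ (-s) (B₁.mulVec (U k s))) (C := C₁) (a := 0) (b := t) ?_
    · rw [sub_zero, abs_of_nonneg ht.1] at h
      exact h
    · intro s hs
      rw [Set.uIoc_of_le ht.1] at hs
      have hs' : s ∈ Set.Icc 0 (ε k) := ⟨hs.1.le, hs.2.trans ht.2⟩
      exact hC₁ (s, U k s)
        ⟨Set.mem_Icc.2 ⟨hs.1.le, hs.2.trans (ht.2.trans (hεle k))⟩, hUmem k s hs'⟩
  set X : ℕ → ℝ → (Fin n → ℝ) := fun k t => Phi A₁ t (x₀ + c k t) with hX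
  have hXderiv : ∀ k t, HasDerivAt (X k) (A₁.mulVec (X k t) + B₁.mulVec (U k t)) t :=
    fun k t => sol_spec A₁ B₁ (U k) (hUcont k) x₀ t
  have hXcont : ∀ k, Continuous (X k) := by
    intro k
    rw [continuous_iff_continuousAt]
    exact fun t => (hXderiv k t).continuousAt
  have hX0 : ∀ k, X k 0 = x₀ := fun k => sol_zero A₁ B₁ (U k) x₀
  -- the compact set of state values
  set Kx : Set (Fin n → ℝ) :=
    (fun p : ℝ × (Fin n → ℝ) => Phi A₁ p.1 p.2) ''
      (Set.Icc (0:ℝ) 1 ×ˢ Metric.closedBall x₀ C₁) with hKx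
  have hKxc : IsCompact Kx :=
    (isCompact_Icc.prod (isCompact_closedBall x₀ C₁)).image (continuous_Phi_apply A₁)
  have hXmem : ∀ k, ∀ t ∈ Set.Icc 0 (ε k), X k t ∈ Kx := by
    intro k t ht
    refine ⟨(t, x₀ + c k t), ⟨Set.mem_Icc.2 ⟨ht.1, ht.2.trans (hεle k)⟩, ?_⟩, rfl⟩
    rw [Metric.mem_closedBall, dist_eq_norm, add_sub_cancel_left]
    calc ‖c k t‖ ≤ C₁ * t := hcbound k t ht
      _ ≤ C₁ * 1 := mul_le_mul_of_nonneg_left (ht.2.trans (hεle k)) hC₁0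
      _ = C₁ := mul_one C₁
  -- uniform bound for the y-system forcing term
  obtain ⟨C₂, hC₂⟩ := (isCompact_Icc.prod (hKxc.prod hKuc)).exists_bound_of_continuousOn
    (f := fun q : ℝ × ((Fin n → ℝ) × (Fin m → ℝ)) =>
      Phi A₂ (-q.1) (B₂.mulVec (G q.2.1 q.2.2)))
    (Continuous.continuousOn (Continuous.clm_apply
      ((continuous_Phi A₂).comp (continuous_fst.neg))
      ((mvL B₂).continuous.comp (hGc.comp continuous_snd))))
  -- the image trajectories
  set Y : ℕ → ℝ → (Fin n → ℝ) := fun k t => H (X k t) (U k t) with hY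
  have hYderiv : ∀ k, ∀ t : ℝ, 0 ≤ t →
      HasDerivAt (Y k) (A₂.mulVec (Y k t) + B₂.mulVec (G (X k t) (U k t))) t :=
    fun k => htrans (X k) (U k) (hUcont k) (fun t _ => hXderiv k t)
  set I : ℕ → (Fin n → ℝ) :=
    fun k => ∫ s in (0:ℝ)..(ε k), Phi A₂ (-s) (B₂.mulVec (G (X k s) (U k s))) with hI
  have hrep : ∀ k, Y k (ε k) = Phi A₂ (ε k) (H x₀ u₀ + I k) := by
    intro k
    have h := rep A₂ (Y k) (fun t => B₂.mulVec (G (X k t) (U k t)))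
      ((mvL B₂).continuous.comp (hGc.comp ((hXcont k).prodMk (hUcont k)))) (ε k) ?_
    · rw [h, hY]
      simp only []
      rw [hX0, hU0]
    · intro t ht
      rw [Set.uIcc_of_le (hεpos k).le] at ht
      exact hYderiv k t ht.1
  have hIbound : ∀ k, ‖I k‖ ≤ C₂ * ε k := by
    intro k
    have h := intervalIntegral.norm_integral_le_of_norm_le_const
      (f := fun s => Phi A₂ (-s) (B₂.mulVec (G (X k s) (U k s)))) (C := C₂)
      (a := 0) (b := ε k) ?_
    · rw [sub_zero, abs_of_nonneg (hεpos k).le] at h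
      exact h
    · intro s hs
      rw [Set.uIoc_of_le (hεpos k).le] at hs
      have hs' : s ∈ Set.Icc 0 (ε k) := ⟨hs.1.le, hs.2⟩
      exact hC₂ (s, (X k s, U k s))
        ⟨Set.mem_Icc.2 ⟨hs.1.le, hs.2.trans (hεle k)⟩, hXmem k s hs', hUmem k s hs'⟩
  -- limits
  have hclim : Tendsto (fun k => c k (ε k)) atTop (𝓝 0) := by
    have hg : Tendsto (fun k => C₁ * ε k) atTop (𝓝 0) := by
      have h := hεlim.const_mul C₁
      rwa [mul_zero] at h
    exact squeeze_zero_norm (fun k => hcbound k (ε k) ⟨(hεpos k).le, le_refl _⟩) hg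
  have hXlim : Tendsto (fun k => X k (ε k)) atTop (𝓝 x₀) := by
    have h1 : Tendsto (fun k => ((ε k : ℝ), x₀ + c k (ε k))) atTop (𝓝 (0, x₀ + 0)) :=
      hεlim.prodMk_nhds (tendsto_const_nhds.add hclim)
    have h2 := ((continuous_Phi_apply A₁).tendsto (0, x₀ + 0)).comp h1
    simpa [Phi_zero, Function.comp_def, hX] using h2
  have hIlim : Tendsto I atTop (𝓝 0) := by
    have hg : Tendsto (fun k => C₂ * ε k) atTop (𝓝 0) := by
      have h := hεlim.const_mul C₂
      rwa [mul_zero] at h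
    exact squeeze_zero_norm (fun k => hIbound k) hg
  have hYlim : Tendsto (fun k => Y k (ε k)) atTop (𝓝 (H x₀ u₀)) := by
    have h1 : Tendsto (fun k => ((ε k : ℝ), H x₀ u₀ + I k)) atTop (𝓝 (0, H x₀ u₀ + 0)) :=
      hεlim.prodMk_nhds (tendsto_const_nhds.add hIlim)
    have h2 := ((continuous_Phi_apply A₂).tendsto (0, H x₀ u₀ + 0)).comp h1
    have h3 : ∀ k, Phi A₂ (ε k) (H x₀ u₀ + I k) = Y k (ε k) := fun k => (hrep k).symm
    simpa [Phi_zero, Function.comp_def, h3] using h2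
  have hYlim' : Tendsto (fun k => Y k (ε k)) atTop (𝓝 (H x₀ u₁)) := by
    have h2 := ((hHcont u₁).tendsto x₀).comp hXlim
    have h3 : ∀ k, H (X k (ε k)) u₁ = Y k (ε k) := by
      intro k; rw [hY]; simp only []; rw [hUε]
    simpa [Function.comp_def, h3] using h2
  exact tendsto_nhds_unique hYlim' hYlim

end Stmt19Aux



/-- Proposition 1.1: if a homeomorphism `F(x,u) = (H(x,u), G(x,u))` of
`ℝⁿ × ℝᵐ` transports solution-control pairs of `ẋ = A₁x + B₁u` to those of
`ẏ = A₂y + B₂v` (and symmetrically for `F⁻¹`), `G` maps bounded sets to bounded sets,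
and `H` and the first component `Z` of `F⁻¹` are continuous in their first variable,
then `H` does not depend on `u`, and `x ↦ H(x,0)` is a homeomorphism of `ℝⁿ`. -/
theorem stmt_19 (n m : ℕ)
    (A₁ A₂ : Matrix (Fin n) (Fin n) ℝ) (B₁ B₂ : Matrix (Fin n) (Fin m) ℝ)
    (H : (Fin n → ℝ) → (Fin m → ℝ) → (Fin n → ℝ))
    (G : (Fin n → ℝ) → (Fin m → ℝ) → (Fin m → ℝ))
    (F : ((Fin n → ℝ) × (Fin m → ℝ)) ≃ₜ ((Fin n → ℝ) × (Fin m → ℝ)))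
    (hF : ∀ p : (Fin n → ℝ) × (Fin m → ℝ), F p = (H p.1 p.2, G p.1 p.2))
    (htrans : ∀ (x : ℝ → Fin n → ℝ) (u : ℝ → Fin m → ℝ), Continuous u →
      (∀ t : ℝ, 0 ≤ t → HasDerivAt x (A₁.mulVec (x t) + B₁.mulVec (u t)) t) →
      ∀ t : ℝ, 0 ≤ t →
        HasDerivAt (fun s => H (x s) (u s))
          (A₂.mulVec (H (x t) (u t)) + B₂.mulVec (G (x t) (u t))) t)
    (htrans' : ∀ (y : ℝ → Fin n → ℝ) (v : ℝ → Fin m → ℝ), Continuous v →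
      (∀ t : ℝ, 0 ≤ t → HasDerivAt y (A₂.mulVec (y t) + B₂.mulVec (v t)) t) →
      ∀ t : ℝ, 0 ≤ t →
        HasDerivAt (fun s => (F.symm (y s, v s)).1)
          (A₁.mulVec ((F.symm (y t, v t)).1) +
            B₁.mulVec ((F.symm (y t, v t)).2)) t)
    (hGbdd : ∀ s : Set ((Fin n → ℝ) × (Fin m → ℝ)), Bornology.IsBounded s →
      Bornology.IsBounded ((fun p : (Fin n → ℝ) × (Fin m → ℝ) => G p.1 p.2) '' s))
    (hHcont : ∀ u : Fin m → ℝ, Continuous fun x => H x u)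
    (hZcont : ∀ v : Fin m → ℝ, Continuous fun y => (F.symm (y, v)).1) :
    (∀ (x : Fin n → ℝ) (u u' : Fin m → ℝ), H x u = H x u') ∧
    IsHomeomorph (fun x : Fin n → ℝ => H x 0) := by
  have hGc : Continuous fun p : (Fin n → ℝ) × (Fin m → ℝ) => G p.1 p.2 := by
    have he : (fun p : (Fin n → ℝ) × (Fin m → ℝ) => G p.1 p.2) = fun p => (F p).2 := by
      funext p; rw [hF p]
    rw [he]
    exact continuous_snd.comp F.continuous
  have hHind : ∀ (x : Fin n → ℝ) (u u' : Fin m → ℝ), H x u = H x u' :=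
    fun x u u' => key A₁ A₂ B₁ B₂ H G hGc hHcont htrans x u' u
  have hWc : Continuous fun p : (Fin n → ℝ) × (Fin m → ℝ) => (F.symm (p.1, p.2)).2 :=
    continuous_snd.comp (F.symm.continuous.comp (continuous_fst.prodMk continuous_snd))
  have hZind : ∀ (y : Fin n → ℝ) (v v' : Fin m → ℝ),
      (F.symm (y, v)).1 = (F.symm (y, v')).1 :=
    fun y v v' => key A₂ A₁ B₂ B₁ (fun y v => (F.symm (y, v)).1)
      (fun y v => (F.symm (y, v)).2) hWc hZcont htrans' y v' v
  refine ⟨hHind, ?_⟩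
  rw [isHomeomorph_iff_exists_inverse]
  refine ⟨hHcont 0, fun y => (F.symm (y, 0)).1, ?_, ?_, hZcont 0⟩
  · intro x
    have h1 : (F.symm (H x 0, 0)).1 = (F.symm (H x 0, G x 0)).1 := hZind _ 0 (G x 0)
    have h2 : ((H x 0, G x 0) : (Fin n → ℝ) × (Fin m → ℝ)) = F (x, 0) := (hF (x, 0)).symm
    simp only [h1, h2, F.symm_apply_apply]
  · intro y
    have h1 := hHind (F.symm (y, 0)).1 0 (F.symm (y, 0)).2
    have h2 : F (F.symm (y, 0)) = ((y, 0) : (Fin n → ℝ) × (Fin m → ℝ)) :=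
      F.apply_symm_apply _
    rw [hF (F.symm (y, 0))] at h2
    simpa [h1] using congrArg Prod.fst h2
end
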